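/- The map σ : sl(3,ℂ) → sl(3,ℂ) defined by σ(X) = −P Xᵀ P is a Lie algebra automorphism of sl(3,ℂ) (it is a ℂ-linear bijection preserving trace-zero matrices with σ([X,Y]) = [σ(X), σ(Y)] for all X, Y ∈ sl(3,ℂ)) of order exactly 6, i.e. σ⁶ = id and σʲ ≠ id for 1 ≤ j ≤ 5. -/

import Mathlib

open Complex Matrix

noncomputable section

abbrev M3 := Matrix (Fin 3) (Fin 3) ℂ

/-- ε = exp(iπ/3). -/
def eps : ℂ := Complex.exp (Real.pi * Complex.I / 3)

/-- The matrix P with rows (0, ε², 0), (ε⁴, 0, 0), (0, 0, 1). -/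
def Pm : M3 := !![0, eps ^ 2, 0; eps ^ 4, 0, 0; 0, 0, 1]

/-- σ(X) = −P Xᵀ P. -/
def sigmaL (X : M3) : M3 := -(Pm * Xᵀ * Pm)


lemma eps6 : eps ^ 6 = 1 := by
  rw [eps, ← Complex.exp_nat_mul]
  rw [show (6:ℕ) * (Real.pi * Complex.I / 3) = 2 * Real.pi * Complex.I by push_cast; ring]
  exact Complex.exp_two_pi_mul_I

lemma eps_pow_ne (k : ℕ) (hk1 : 1 ≤ k) (hk5 : k ≤ 5) (h : eps ^ k = 1) : False := by
  rw [eps, ← Complex.exp_nat_mul, Complex.exp_eq_one_iff] at h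
  obtain ⟨n, hn⟩ := h
  have hπ : (Real.pi : ℂ) ≠ 0 := by exact_mod_cast Real.pi_ne_zero
  have h2 : ((k:ℂ)) * (Real.pi * Complex.I) = ((6*n : ℤ) : ℂ) * (Real.pi * Complex.I) := by
    push_cast; linear_combination 3 * hn
  have h3 : ((k:ℂ)) = ((6*n : ℤ) : ℂ) :=
    mul_right_cancel₀ (mul_ne_zero hπ Complex.I_ne_zero) h2
  have h4 : (k : ℤ) = 6 * n := by exact_mod_cast h3
  have h5 : (6:ℤ) ∣ (k:ℤ) := ⟨n, h4⟩
  have h6 : 6 ∣ k := by exact_mod_cast h5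
  omega

def Am : M3 := !![eps^4, 0, 0; 0, eps^8, 0; 0, 0, 1]
def Bm : M3 := !![eps^8, 0, 0; 0, eps^4, 0; 0, 0, 1]

lemma hPP : Pm * Pm = 1 := by
  ext i j
  fin_cases i <;> fin_cases j <;>
    simp [Pm, Matrix.mul_apply, Fin.sum_univ_succ, Matrix.vecHead, Matrix.vecTail, Function.comp, Matrix.one_apply] <;>
    linear_combination eps6

lemma hPmT : Pmᵀ = !![0, eps^4, 0; eps^2, 0, 0; 0, 0, 1] := by
  ext i j
  fin_cases i <;> fin_cases j <;> simp [Pm, Matrix.vecHead, Matrix.vecTail]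

lemma hPPt : Pm * Pmᵀ = Am := by
  rw [hPmT]
  ext i j
  fin_cases i <;> fin_cases j <;>
    simp [Pm, Am, Matrix.mul_apply, Fin.sum_univ_succ, Matrix.vecHead, Matrix.vecTail, Function.comp] <;> ring

lemma hPtP : Pmᵀ * Pm = Bm := by
  rw [hPmT]
  ext i j
  fin_cases i <;> fin_cases j <;>
    simp [Pm, Bm, Matrix.mul_apply, Fin.sum_univ_succ, Matrix.vecHead, Matrix.vecTail, Function.comp] <;> ring

lemma hA3 : Am * (Am * Am) = 1 := by
  ext i j
  fin_cases i <;> fin_cases j <;>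
    simp [Am, Matrix.mul_apply, Fin.sum_univ_succ, Matrix.vecHead, Matrix.vecTail, Function.comp, Matrix.one_apply] <;>
    first
      | linear_combination (eps^6 + 1) * eps6
      | linear_combination (eps^18 + eps^12 + eps^6 + 1) * eps6

lemma hB3 : Bm * (Bm * Bm) = 1 := by
  ext i j
  fin_cases i <;> fin_cases j <;>
    simp [Bm, Matrix.mul_apply, Fin.sum_univ_succ, Matrix.vecHead, Matrix.vecTail, Function.comp, Matrix.one_apply] <;>
    first
      | linear_combination (eps^6 + 1) * eps6
      | linear_combination (eps^18 + eps^12 + eps^6 + 1) * eps6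

lemma sigma2 : ∀ X : M3, sigmaL (sigmaL X) = Am * X * Bm := by
  intro X
  simp only [sigmaL, Matrix.transpose_neg, Matrix.transpose_mul, Matrix.transpose_transpose,
    Matrix.neg_mul, Matrix.mul_neg, neg_neg]
  have h : Pm * (Pmᵀ * (X * Pmᵀ)) * Pm = (Pm * Pmᵀ) * X * (Pmᵀ * Pm) := by noncomm_ring
  rw [h, hPPt, hPtP]

lemma sigma6 : ∀ X : M3, sigmaL^[6] X = X := by
  intro X
  show sigmaL (sigmaL (sigmaL (sigmaL (sigmaL (sigmaL X))))) = X
  rw [sigma2, sigma2, sigma2]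
  have h : Am * (Am * (Am * X * Bm) * Bm) * Bm
      = (Am * (Am * Am)) * X * (Bm * (Bm * Bm)) := by noncomm_ring
  rw [h, hA3, hB3, one_mul, mul_one]


lemma htr : ∀ X : M3, (sigmaL X).trace = - X.trace := by
  intro X
  rw [sigmaL, Matrix.trace_neg, Matrix.trace_mul_comm (Pm * Xᵀ) Pm, ← Matrix.mul_assoc,
    hPP, one_mul, Matrix.trace_transpose]

lemma key2 : ∀ U V : M3, Pm * U * Pm * (Pm * V * Pm) = Pm * (U * V) * Pm := by
  intro U V
  have h : Pm * U * Pm * (Pm * V * Pm) = Pm * U * (Pm * Pm) * (V * Pm) := by noncomm_ring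
  rw [h, hPP]
  noncomm_ring

lemma hbr : ∀ X Y : M3, sigmaL ⁅X, Y⁆ = ⁅sigmaL X, sigmaL Y⁆ := by
  intro X Y
  simp only [Ring.lie_def, sigmaL, Matrix.transpose_sub, Matrix.transpose_mul]
  rw [neg_mul_neg, neg_mul_neg, key2, key2]
  noncomm_ring

def D0 : M3 := !![1,0,0;0,1,0;0,0,-2]
def D1 : M3 := !![-1,0,0;0,-1,0;0,0,2]
def Em : M3 := !![0,0,1;0,0,0;0,0,0]

lemma hD0 : sigmaL D0 = D1 := by
  ext i j
  fin_cases i <;> fin_cases j <;>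
    simp [sigmaL, Pm, D0, D1, Matrix.mul_apply, Matrix.transpose_apply, Fin.sum_univ_succ,
      Matrix.vecHead, Matrix.vecTail, Matrix.vecMul, dotProduct] <;>
    first
      | ring1
      | exact eps6
      | linear_combination -eps6
      | linear_combination eps6
      | linear_combination 2 * eps6
      | linear_combination -2 * eps6

lemma hD1 : sigmaL D1 = D0 := by
  ext i j
  fin_cases i <;> fin_cases j <;>
    simp [sigmaL, Pm, D0, D1, Matrix.mul_apply, Matrix.transpose_apply, Fin.sum_univ_succ,
      Matrix.vecHead, Matrix.vecTail, Matrix.vecMul, dotProduct] <;>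
    first
      | ring1
      | exact eps6
      | linear_combination -eps6
      | linear_combination eps6
      | linear_combination 2 * eps6
      | linear_combination -2 * eps6

lemma hD01 : D1 ≠ D0 := by
  intro h
  have h2 := congrFun (congrFun h 2) 2
  simp [D0, D1] at h2
  norm_num at h2

lemma hEm : Am * Em * Bm = eps ^ 4 • Em := by
  ext i j
  fin_cases i <;> fin_cases j <;>
    simp [Am, Bm, Em, Matrix.smul_apply, Matrix.mul_apply, Fin.sum_univ_succ,
      Matrix.vecHead, Matrix.vecTail, Function.comp] <;>
    first
      | ring1
      | simp [Matrix.vecHead, Matrix.vecTail, Function.comp]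

lemma hEtr : Em.trace = 0 := by simp [Em, Matrix.trace_fin_three, Matrix.vecHead, Matrix.vecTail]

lemma hD0tr : D0.trace = 0 := by
  simp [D0, Matrix.trace_fin_three]; norm_num


/-- σ is a Lie algebra automorphism of sl(3,ℂ) of order exactly 6. -/
theorem statement0 :
    Set.BijOn sigmaL {X : M3 | X.trace = 0} {X : M3 | X.trace = 0} ∧
    (∀ (c : ℂ) (X Y : M3), sigmaL (c • X + Y) = c • sigmaL X + sigmaL Y) ∧
    (∀ X Y : M3, sigmaL ⁅X, Y⁆ = ⁅sigmaL X, sigmaL Y⁆) ∧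
    (∀ X : M3, X.trace = 0 → sigmaL^[6] X = X) ∧
    (∀ j : ℕ, 1 ≤ j → j ≤ 5 → ∃ X : M3, X.trace = 0 ∧ sigmaL^[j] X ≠ X) := by
  refine ⟨⟨?_, ?_, ?_⟩, ?_, hbr, fun X _ => sigma6 X, ?_⟩
  · -- MapsTo
    intro X hX
    simp only [Set.mem_setOf_eq] at *
    rw [htr, hX, neg_zero]
  · -- InjOn
    intro X _ Y _ h
    have hx := sigma6 X
    have hy := sigma6 Y
    rw [show (6:ℕ) = 5+1 from rfl, Function.iterate_succ_apply] at hx hy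
    rw [← hx, ← hy, h]
  · -- SurjOn
    intro Y hY
    refine ⟨sigmaL^[5] Y, ?_, ?_⟩
    · simp only [Set.mem_setOf_eq] at *
      show (sigmaL (sigmaL (sigmaL (sigmaL (sigmaL Y))))).trace = 0
      simp [htr, hY]
    · have h6 := sigma6 Y
      rwa [show (6:ℕ) = 5+1 from rfl, Function.iterate_succ_apply'] at h6
  · -- linearity
    intro c X Y
    simp only [sigmaL, Matrix.transpose_add, Matrix.transpose_smul, Matrix.add_mul,
      Matrix.mul_add, Matrix.smul_mul, Matrix.mul_smul, neg_add, smul_neg]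
  · -- order exactly 6
    intro j hj1 hj5
    interval_cases j
    · exact ⟨D0, hD0tr, by show sigmaL D0 ≠ D0; rw [hD0]; exact hD01⟩
    · refine ⟨Em, hEtr, ?_⟩
      show sigmaL (sigmaL Em) ≠ Em
      rw [sigma2, hEm]
      intro h
      have h2 := congrFun (congrFun h 0) 2
      simp [Em, Matrix.smul_apply] at h2
      exact eps_pow_ne 4 (by norm_num) (by norm_num) h2
    · exact ⟨D0, hD0tr, by
        show sigmaL (sigmaL (sigmaL D0)) ≠ D0
        rw [hD0, hD1, hD0]; exact hD01⟩
    · refine ⟨Em, hEtr, ?_⟩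
      show sigmaL (sigmaL (sigmaL (sigmaL Em))) ≠ Em
      have h1 : sigmaL (sigmaL Em) = eps ^ 4 • Em := by rw [sigma2, hEm]
      have hh : sigmaL (sigmaL (eps ^ 4 • Em)) = eps ^ 4 • (eps ^ 4 • Em) := by
        rw [sigma2, Matrix.mul_smul, Matrix.smul_mul, hEm]
      rw [h1, hh, smul_smul]
      intro h
      have h2 := congrFun (congrFun h 0) 2
      simp [Em, Matrix.smul_apply] at h2
      have h8 : eps ^ 2 = 1 := by linear_combination h2 - eps ^ 2 * eps6
      exact eps_pow_ne 2 (by norm_num) (by norm_num) h8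
    · exact ⟨D0, hD0tr, by
        show sigmaL (sigmaL (sigmaL (sigmaL (sigmaL D0)))) ≠ D0
        rw [hD0, hD1, hD0, hD1, hD0]; exact hD01⟩
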